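/- Let P_{XY} be a joint probability mass function on a finite set 𝒳 × 𝒴 and assume that c := ∑_{y ∈ 𝒴} min_{x : P_X(x) > 0} P_{Y|X}(y|x) > 0. Then for every finite set 𝒰 and every channel P_{U|X}, the ratio γ(P_U) / [∑_{y : P_Y(y) > 0} P_Y(y) γ(P_{U|Y}(·|y))] is at most 1/c; i.e., the maximal guesswork leakage from X to Y is at most −log ∑_{y ∈ 𝒴} min_{x : P_X(x) > 0} P_{Y|X}(y|x). -/
import Mathlib


open Finset

/-- The guesswork of a pmf `P` on a finite set `U`: the minimum over all
guessing functions (bijections `G : U → {1,…,n}`) of `∑ u, G(u) · P(u)`. -/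
noncomputable def guesswork {U : Type*} [Fintype U] (P : U → ℝ) : ℝ :=
  ⨅ G : U ≃ Fin (Fintype.card U), ∑ u, ((G u).val + 1 : ℝ) * P u

lemma guesswork_nonneg {U : Type*} [Fintype U] (P : U → ℝ) (h : ∀ u, 0 ≤ P u) :
    0 ≤ guesswork P := by
  haveI : Nonempty (U ≃ Fin (Fintype.card U)) := ⟨Fintype.equivFin U⟩
  exact le_ciInf fun G => Finset.sum_nonneg fun u _ => mul_nonneg (by positivity) (h u)

lemma mul_guesswork_le {U : Type*} [Fintype U] (P Q : U → ℝ) (a : ℝ)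
    (hP : ∀ u, 0 ≤ P u) (ha : 0 ≤ a) (h : ∀ u, a * P u ≤ Q u) :
    a * guesswork P ≤ guesswork Q := by
  haveI : Nonempty (U ≃ Fin (Fintype.card U)) := ⟨Fintype.equivFin U⟩
  refine le_ciInf fun G => ?_
  have hbdd : BddBelow (Set.range fun G : U ≃ Fin (Fintype.card U) =>
      ∑ u, ((G u).val + 1 : ℝ) * P u) := by
    refine ⟨0, ?_⟩
    rintro r ⟨G', rfl⟩
    exact Finset.sum_nonneg fun u _ => mul_nonneg (by positivity) (hP u)
  have h1 : guesswork P ≤ ∑ u, ((G u).val + 1 : ℝ) * P u := ciInf_le hbdd G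
  calc a * guesswork P ≤ a * ∑ u, ((G u).val + 1 : ℝ) * P u :=
        mul_le_mul_of_nonneg_left h1 ha
    _ = ∑ u, ((G u).val + 1 : ℝ) * (a * P u) := by
        rw [Finset.mul_sum]; exact Finset.sum_congr rfl fun u _ => by ring
    _ ≤ ∑ u, ((G u).val + 1 : ℝ) * Q u :=
        Finset.sum_le_sum fun u _ => mul_le_mul_of_nonneg_left (h u) (by positivity)

theorem maximal_guesswork_leakage_upper_bound
    {X Y : Type*} [Fintype X] [Fintype Y]
    (PXY : X → Y → ℝ)
    (hnn : ∀ x y, 0 ≤ PXY x y)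
    (hsum : ∑ x, ∑ y, PXY x y = 1)
    (c : ℝ)
    (hc_def : c = ∑ y, sInf {r : ℝ | ∃ x, 0 < (∑ y', PXY x y') ∧
        r = PXY x y / ∑ y', PXY x y'})
    (hc : 0 < c) :
    ∀ (n : ℕ) (K : X → Fin n → ℝ),
      (∀ x u, 0 ≤ K x u) → (∀ x, ∑ u, K x u = 1) →
      guesswork (fun u => ∑ x, K x u * (∑ y', PXY x y')) /
          (∑ y ∈ univ.filter (fun y => 0 < ∑ x, PXY x y),
            (∑ x, PXY x y) *
              guesswork (fun u => ∑ x, K x u * (PXY x y / ∑ x', PXY x' y)))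
        ≤ 1 / c := by
  intro n K hK hKsum
  -- notation
  set PX : X → ℝ := fun x => ∑ y', PXY x y' with hPXdef
  set PY : Y → ℝ := fun y => ∑ x, PXY x y with hPYdef
  set cy : Y → ℝ := fun y => sInf {r : ℝ | ∃ x, 0 < PX x ∧ r = PXY x y / PX x} with hcydef
  set PU : Fin n → ℝ := fun u => ∑ x, K x u * PX x with hPUdef
  have hPXnn : ∀ x, 0 ≤ PX x := fun x => Finset.sum_nonneg fun y _ => hnn x y
  have hPYnn : ∀ y, 0 ≤ PY y := fun y => Finset.sum_nonneg fun x _ => hnn x y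
  have hPUnn : ∀ u, 0 ≤ PU u := fun u =>
    Finset.sum_nonneg fun x _ => mul_nonneg (hK x u) (hPXnn x)
  have hPXsum : ∑ x, PX x = 1 := hsum
  have hex : ∃ x, 0 < PX x := by
    by_contra h
    push_neg at h
    have : ∑ x, PX x = 0 :=
      Finset.sum_eq_zero fun x _ => le_antisymm (h x) (hPXnn x)
    rw [hPXsum] at this; norm_num at this
  have hbddset : ∀ y, BddBelow {r : ℝ | ∃ x, 0 < PX x ∧ r = PXY x y / PX x} := by
    intro y
    refine ⟨0, ?_⟩
    rintro r ⟨x, hx, rfl⟩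
    exact div_nonneg (hnn x y) (hPXnn x)
  have hcynn : ∀ y, 0 ≤ cy y := fun y =>
    Real.sInf_nonneg fun r ⟨x, hx, hr⟩ => hr ▸ div_nonneg (hnn x y) (hPXnn x)
  -- pointwise key: cy y * PX x ≤ PXY x y
  have hpt : ∀ y x, cy y * PX x ≤ PXY x y := by
    intro y x
    rcases eq_or_lt_of_le (hPXnn x) with h0 | h0
    · have hz : PXY x y = 0 := by
        have h1 : PXY x y ≤ PX x := by
          exact Finset.single_le_sum (fun y' _ => hnn x y') (Finset.mem_univ y)
        nlinarith [hnn x y]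
      rw [← h0, mul_zero, hz]
    · have hle : cy y ≤ PXY x y / PX x :=
        csInf_le (hbddset y) ⟨x, h0, rfl⟩
      calc cy y * PX x ≤ (PXY x y / PX x) * PX x :=
            mul_le_mul_of_nonneg_right hle (hPXnn x)
        _ = PXY x y := div_mul_cancel₀ _ (ne_of_gt h0)
  -- key per-y inequality
  have hkey : ∀ y, cy y * guesswork PU ≤
      PY y * guesswork (fun u => ∑ x, K x u * (PXY x y / PY y)) := by
    intro y
    rcases eq_or_lt_of_le (hPYnn y) with h0 | h0
    · -- PY y = 0, hence cy y = 0
      have hzx : ∀ x, PXY x y = 0 := by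
        intro x
        have h1 : PXY x y ≤ PY y := by
          exact Finset.single_le_sum (fun x' _ => hnn x' y) (Finset.mem_univ x)
        nlinarith [hnn x y]
      obtain ⟨x0, hx0⟩ := hex
      have hcyle : cy y ≤ 0 := by
        have : (0 : ℝ) ∈ {r : ℝ | ∃ x, 0 < PX x ∧ r = PXY x y / PX x} :=
          ⟨x0, hx0, by rw [hzx x0, zero_div]⟩
        exact csInf_le (hbddset y) this
      have : cy y = 0 := le_antisymm hcyle (hcynn y)
      rw [this, zero_mul, ← h0, zero_mul]
    · -- PY y > 0
      have hQnn : ∀ u, 0 ≤ PU u := hPUnn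
      have hmain : (cy y / PY y) * guesswork PU ≤
          guesswork (fun u => ∑ x, K x u * (PXY x y / PY y)) := by
        apply mul_guesswork_le _ _ _ hPUnn (div_nonneg (hcynn y) (hPYnn y))
        intro u
        rw [hPUdef]
        simp only
        rw [Finset.mul_sum]
        refine Finset.sum_le_sum fun x _ => ?_
        have h1 : cy y * PX x ≤ PXY x y := hpt y x
        have h2 : cy y / PY y * (K x u * PX x) = K x u * (cy y * PX x / PY y) := by ring
        rw [h2]
        refine mul_le_mul_of_nonneg_left ?_ (hK x u)
        gcongr
      have := mul_le_mul_of_nonneg_left hmain (le_of_lt h0)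
      calc cy y * guesswork PU = PY y * ((cy y / PY y) * guesswork PU) := by
            field_simp
        _ ≤ PY y * guesswork (fun u => ∑ x, K x u * (PXY x y / PY y)) := this
  -- sum over y
  set D : ℝ := ∑ y ∈ univ.filter (fun y => 0 < ∑ x, PXY x y),
      (∑ x, PXY x y) * guesswork (fun u => ∑ x, K x u * (PXY x y / ∑ x', PXY x' y)) with hDdef
  have hDfull : D = ∑ y, PY y * guesswork (fun u => ∑ x, K x u * (PXY x y / PY y)) := by
    rw [hDdef]
    refine Finset.sum_subset (Finset.filter_subset _ _) ?_
    intro y _ hy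
    rw [Finset.mem_filter] at hy
    push_neg at hy
    have : PY y = 0 := le_antisymm (hy (Finset.mem_univ y)) (hPYnn y)
    rw [show (∑ x, PXY x y) = PY y from rfl, this, zero_mul]
  have hcsum : c = ∑ y, cy y := hc_def
  have hmain2 : c * guesswork PU ≤ D := by
    rw [hcsum, Finset.sum_mul, hDfull]
    exact Finset.sum_le_sum fun y _ => hkey y
  have hγnn : 0 ≤ guesswork PU := guesswork_nonneg _ hPUnn
  have hDnn : 0 ≤ D := le_trans (mul_nonneg (le_of_lt hc) hγnn) hmain2
  rcases eq_or_lt_of_le hDnn with hD0 | hD0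
  · have : guesswork PU = 0 := by nlinarith
    rw [show (guesswork fun u => ∑ x, K x u * (∑ y', PXY x y')) = guesswork PU from rfl,
      this, zero_div]
    positivity
  · rw [show (guesswork fun u => ∑ x, K x u * (∑ y', PXY x y')) = guesswork PU from rfl]
    rw [div_le_div_iff₀ hD0 hc]
    nlinarith
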